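/- If G is a dicotic game whose game tree has height (birthday) at most n+1, then G ≤ n·↑ or G ≤ n·↑ + *. -/

import Mathlib

universe u

namespace SetTheory

/-- Pre-games, as in Mathlib before combinatorial game theory was removed from it. -/
inductive PGame : Type (u + 1)
  | mk : ∀ α β : Type u, (α → PGame) → (β → PGame) → PGame

namespace PGame

def LeftMoves : PGame → Type u
  | mk l _ _ _ => l

def RightMoves : PGame → Type u
  | mk _ r _ _ => r

def moveLeft : ∀ g : PGame, LeftMoves g → PGame
  | mk _ _ L _ => L

def moveRight : ∀ g : PGame, RightMoves g → PGame
  | mk _ _ _ R => R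

inductive IsOption : PGame → PGame → Prop
  | moveLeft {x : PGame} (i : x.LeftMoves) : IsOption (x.moveLeft i) x
  | moveRight {x : PGame} (i : x.RightMoves) : IsOption (x.moveRight i) x

theorem wf_isOption : WellFounded IsOption :=
  ⟨fun x => by
    induction x with
    | mk l r L R IHl IHr =>
      refine Acc.intro _ fun y h => ?_
      cases h with
      | moveLeft i => exact IHl i
      | moveRight j => exact IHr j⟩

instance : WellFoundedRelation PGame :=
  ⟨IsOption, wf_isOption⟩

@[simp]
theorem isOption_moveLeft (x : PGame) (i : x.LeftMoves) : IsOption (x.moveLeft i) x :=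
  IsOption.moveLeft i

@[simp]
theorem isOption_moveRight (x : PGame) (j : x.RightMoves) : IsOption (x.moveRight j) x :=
  IsOption.moveRight j

instance : Zero PGame :=
  ⟨⟨PEmpty, PEmpty, PEmpty.elim, PEmpty.elim⟩⟩

instance : One PGame :=
  ⟨⟨PUnit, PEmpty, fun _ => 0, PEmpty.elim⟩⟩

def ofLists (L R : List PGame.{u}) : PGame.{u} :=
  mk (ULift (Fin L.length)) (ULift (Fin R.length)) (fun i => L[i.down.1]) fun j => R[j.down.1]

def star : PGame.{u} :=
  ⟨PUnit, PUnit, fun _ => 0, fun _ => 0⟩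

def neg : PGame → PGame
  | ⟨l, r, L, R⟩ => ⟨r, l, fun i => neg (R i), fun i => neg (L i)⟩

instance : Neg PGame :=
  ⟨neg⟩

/-- Inner recursion of `add`: `addAux xl xr IHl IHr y` is `mk xl xr xL xR + y`,
given `IHl i = (xL i + ·)` and `IHr j = (xR j + ·)`. -/
def addAux (xl xr : Type u) (IHl : xl → PGame → PGame) (IHr : xr → PGame → PGame) :
    PGame → PGame
  | mk yl yr yL yR =>
    mk (xl ⊕ yl) (xr ⊕ yr)
      (Sum.rec (fun i => IHl i (mk yl yr yL yR)) fun j => addAux xl xr IHl IHr (yL j))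
      (Sum.rec (fun i => IHr i (mk yl yr yL yR)) fun j => addAux xl xr IHl IHr (yR j))

def add : PGame → PGame → PGame
  | mk xl xr xL xR => addAux xl xr (fun i => add (xL i)) (fun j => add (xR j))

instance : Add PGame :=
  ⟨add⟩

/-- The pair (x ≤ y, x ⧏ y), by simultaneous recursion. -/
noncomputable def leLF (x : PGame) : PGame → Prop × Prop := by
  induction x with | mk xl xr xL xR IHxl IHxr => _
  intro y
  induction y with | mk yl yr yL yR IHyl IHyr => _
  exact ((∀ i, (IHxl i (mk yl yr yL yR)).2) ∧ ∀ j, (IHyr j).2,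
    (∃ i, (IHyl i).1) ∨ ∃ j, (IHxr j (mk yl yr yL yR)).1)

noncomputable instance : LE PGame :=
  ⟨fun x y => (leLF x y).1⟩

noncomputable instance : LT PGame :=
  ⟨fun x y => x ≤ y ∧ ¬y ≤ x⟩

noncomputable def birthday : PGame.{u} → Ordinal.{u}
  | ⟨_, _, xL, xR⟩ => max (⨆ i, Order.succ (birthday (xL i))) (⨆ i, Order.succ (birthday (xR i)))

end PGame

end SetTheory
open SetTheory PGame
open scoped PGame

/-- The game up, ↑ = {0 | *}. -/
def upG : PGame := ofLists [0] [star]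

/-- The game down, ↓ = {* | 0}. -/
def downG : PGame := ofLists [star] [0]

/-- `copies n G` is the disjunctive sum of `n` copies of `G`. -/
def copies : ℕ → PGame → PGame
  | 0, _ => 0
  | n + 1, G => copies n G + G

/-- A game is dicotic (all-small) if either it has no options for either player, or
both players have at least one option and every option is dicotic. -/
def Dicotic (G : PGame) : Prop :=
  (IsEmpty G.LeftMoves ∧ IsEmpty G.RightMoves ∨
    Nonempty G.LeftMoves ∧ Nonempty G.RightMoves) ∧
    (∀ i, Dicotic (G.moveLeft i)) ∧ ∀ j, Dicotic (G.moveRight j)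
termination_by G

/-- The dicotic transformation δ: every empty option set is replaced by the single option 0. -/
def delta : PGame → PGame
  | PGame.mk l r L R =>
    PGame.mk (l ⊕ PLift (IsEmpty l)) (r ⊕ PLift (IsEmpty r))
      (Sum.rec (fun i => delta (L i)) fun _ => 0)
      (Sum.rec (fun j => delta (R j)) fun _ => 0)

/-- A game is infinitesimal if every positive multiple lies strictly between -1 and 1. -/
def Infinitesimal (G : PGame) : Prop :=
  ∀ n : ℕ, 0 < n → copies n G < 1 ∧ -1 < copies n G


namespace SetTheory

namespace PGame

theorem leLF_mk {xl xr yl yr : Type u} (xL : xl → PGame.{u}) (xR : xr → PGame.{u})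
    (yL : yl → PGame.{u}) (yR : yr → PGame.{u}) :
    leLF (mk xl xr xL xR) (mk yl yr yL yR) =
      ((∀ i, (leLF (xL i) (mk yl yr yL yR)).2) ∧ ∀ j, (leLF (mk xl xr xL xR) (yR j)).2,
        (∃ i, (leLF (mk xl xr xL xR) (yL i)).1) ∨ ∃ j, (leLF (xR j) (mk yl yr yL yR)).1) := rfl

/-- The less or fuzzy relation. -/
def LF (x y : PGame.{u}) : Prop := ¬ y ≤ x

infix:50 " ⧏ " => LF

theorem leLF_snd_iff : ∀ x y : PGame.{u},
    ((leLF x y).2 ↔ ¬ (leLF y x).1) ∧ ((leLF y x).2 ↔ ¬ (leLF x y).1) := by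
  intro x
  induction x with
  | mk xl xr xL xR IHxl IHxr =>
    intro y
    induction y with
    | mk yl yr yL yR IHyl IHyr =>
      rw [leLF_mk xL xR yL yR, leLF_mk yL yR xL xR]
      dsimp only
      constructor
      · rw [not_and_or, not_forall, not_forall]
        refine or_congr (exists_congr fun i => ?_) (exists_congr fun j => ?_)
        · rw [(IHyl i).2, not_not]
        · rw [(IHxr j _).2, not_not]
      · rw [not_and_or, not_forall, not_forall]
        refine or_congr (exists_congr fun i => ?_) (exists_congr fun j => ?_)
        · rw [(IHxl i _).1, not_not]
        · rw [(IHyr j).1, not_not]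

theorem lf_iff_leLF (x y : PGame.{u}) : x ⧏ y ↔ (leLF x y).2 := (leLF_snd_iff x y).1.symm

theorem le_iff_forall_lf {x y : PGame.{u}} :
    x ≤ y ↔ (∀ i, x.moveLeft i ⧏ y) ∧ ∀ j, x ⧏ y.moveRight j := by
  obtain ⟨xl, xr, xL, xR⟩ := x
  obtain ⟨yl, yr, yL, yR⟩ := y
  simp only [lf_iff_leLF]
  exact Iff.rfl

theorem lf_iff_exists_le {x y : PGame.{u}} :
    x ⧏ y ↔ (∃ i, x ≤ y.moveLeft i) ∨ ∃ j, x.moveRight j ≤ y := by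
  obtain ⟨xl, xr, xL, xR⟩ := x
  obtain ⟨yl, yr, yL, yR⟩ := y
  rw [lf_iff_leLF]
  exact Iff.rfl

theorem not_le {x y : PGame.{u}} : ¬ x ≤ y ↔ y ⧏ x := Iff.rfl

theorem lf_of_le_moveLeft {x y : PGame.{u}} {i : y.LeftMoves} (h : x ≤ y.moveLeft i) : x ⧏ y :=
  lf_iff_exists_le.2 (Or.inl ⟨i, h⟩)

theorem lf_of_moveRight_le {x y : PGame.{u}} {j : x.RightMoves} (h : x.moveRight j ≤ y) : x ⧏ y :=
  lf_iff_exists_le.2 (Or.inr ⟨j, h⟩)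

theorem moveLeft_lf_of_le {x y : PGame.{u}} (h : x ≤ y) (i : x.LeftMoves) : x.moveLeft i ⧏ y :=
  (le_iff_forall_lf.1 h).1 i

theorem lf_moveRight_of_le {x y : PGame.{u}} (h : x ≤ y) (j : y.RightMoves) : x ⧏ y.moveRight j :=
  (le_iff_forall_lf.1 h).2 j

theorem le_refl_pg : ∀ x : PGame.{u}, x ≤ x := by
  intro x
  induction x with
  | mk xl xr xL xR IHl IHr =>
    exact le_iff_forall_lf.2 ⟨fun i => lf_of_le_moveLeft (i := i) (IHl i),
      fun j => lf_of_moveRight_le (j := j) (IHr j)⟩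

theorem le_trans_aux {x y z : PGame.{u}}
    (h₁ : ∀ {i}, y ≤ z → z ≤ x.moveLeft i → y ≤ x.moveLeft i)
    (h₂ : ∀ {j}, z.moveRight j ≤ x → x ≤ y → z.moveRight j ≤ y) (hxy : x ≤ y) (hyz : y ≤ z) :
    x ≤ z :=
  le_iff_forall_lf.2 ⟨fun i h => moveLeft_lf_of_le hxy i (h₁ hyz h),
    fun j h => lf_moveRight_of_le hyz j (h₂ h hxy)⟩

theorem le_trans_pg : ∀ x y z : PGame.{u},
    (x ≤ y → y ≤ z → x ≤ z) ∧ (y ≤ z → z ≤ x → y ≤ x) ∧ (z ≤ x → x ≤ y → z ≤ y) := by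
  intro x
  induction x with
  | mk xl xr xL xR IHxl IHxr =>
    intro y
    induction y with
    | mk yl yr yL yR IHyl IHyr =>
      intro z
      induction z with
      | mk zl zr zL zR IHzl IHzr =>
        exact ⟨le_trans_aux (fun {i} => (IHxl i _ _).2.1) (fun {j} => (IHzr j).2.2),
          le_trans_aux (fun {i} => (IHyl i _).2.2) (fun {j} => (IHxr j _ _).1),
          le_trans_aux (fun {i} => (IHzl i).1) (fun {j} => (IHyr j _).2.1)⟩

instance : Preorder PGame.{u} where
  le := (· ≤ ·)
  lt := (· < ·)
  le_refl := le_refl_pg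
  le_trans := fun x y z => (le_trans_pg x y z).1
  lt_iff_le_not_ge := fun _ _ => Iff.rfl

theorem lf_of_le_of_lf {x y z : PGame.{u}} (h1 : x ≤ y) (h2 : y ⧏ z) : x ⧏ z :=
  fun h => h2 (le_trans h h1)

theorem lf_of_lf_of_le {x y z : PGame.{u}} (h1 : x ⧏ y) (h2 : y ≤ z) : x ⧏ z :=
  fun h => h1 (le_trans h2 h)

theorem moveLeft_lf (x : PGame.{u}) (i : x.LeftMoves) : x.moveLeft i ⧏ x :=
  lf_of_le_moveLeft (i := i) (le_refl _)

theorem lf_moveRight (x : PGame.{u}) (j : x.RightMoves) : x ⧏ x.moveRight j :=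
  lf_of_moveRight_le (j := j) (le_refl _)

instance setoid : Setoid PGame.{u} :=
  ⟨fun x y => x ≤ y ∧ y ≤ x, ⟨fun x => ⟨le_refl x, le_refl x⟩, fun h => ⟨h.2, h.1⟩,
    fun h1 h2 => ⟨le_trans h1.1 h2.1, le_trans h2.2 h1.2⟩⟩⟩

theorem equiv_def {x y : PGame.{u}} : x ≈ y ↔ x ≤ y ∧ y ≤ x := Iff.rfl

instance isEmpty_zero_leftMoves : IsEmpty (LeftMoves.{u} 0) := ⟨fun i => PEmpty.elim i⟩

instance isEmpty_zero_rightMoves : IsEmpty (RightMoves.{u} 0) := ⟨fun i => PEmpty.elim i⟩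

@[simp] theorem star_moveLeft (i : star.{u}.LeftMoves) : star.moveLeft i = 0 := rfl

@[simp] theorem star_moveRight (j : star.{u}.RightMoves) : star.moveRight j = 0 := rfl

theorem star_fuzzy_zero : star.{u} ⧏ 0 ∧ 0 ⧏ star.{u} :=
  ⟨lf_of_moveRight_le (j := PUnit.unit) (le_refl _),
    lf_of_le_moveLeft (i := PUnit.unit) (le_refl _)⟩

theorem leftMoves_ofLists (L R : List PGame.{u}) :
    (ofLists L R).LeftMoves = ULift (Fin L.length) := rfl

theorem ofLists_moveLeft' {L R : List PGame.{u}} (i : (ofLists L R).LeftMoves) :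
    (ofLists L R).moveLeft i = L[(show ULift (Fin L.length) from i).down.1] := rfl

theorem ofLists_moveRight' {L R : List PGame.{u}} (i : (ofLists L R).RightMoves) :
    (ofLists L R).moveRight i = R[(show ULift (Fin R.length) from i).down.1] := rfl

theorem neg_zero_pg : -(0 : PGame.{u}) = 0 := by
  show PGame.mk PEmpty PEmpty _ _ = PGame.mk PEmpty PEmpty _ _
  congr 1 <;> funext i <;> exact i.elim

theorem neg_star : -star.{u} = star := by
  show PGame.mk PUnit PUnit (fun _ => -0) (fun _ => -0) =
    PGame.mk PUnit PUnit (fun _ => 0) (fun _ => 0)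
  rw [neg_zero_pg]

theorem leftMoves_add (x y : PGame.{u}) : (x + y).LeftMoves = (x.LeftMoves ⊕ y.LeftMoves) := by
  cases x; cases y; rfl

theorem rightMoves_add (x y : PGame.{u}) :
    (x + y).RightMoves = (x.RightMoves ⊕ y.RightMoves) := by
  cases x; cases y; rfl

def toLeftMovesAdd {x y : PGame.{u}} : x.LeftMoves ⊕ y.LeftMoves ≃ (x + y).LeftMoves :=
  Equiv.cast (leftMoves_add x y).symm

def toRightMovesAdd {x y : PGame.{u}} : x.RightMoves ⊕ y.RightMoves ≃ (x + y).RightMoves :=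
  Equiv.cast (rightMoves_add x y).symm

@[simp] theorem add_moveLeft_inl {x : PGame.{u}} (y : PGame.{u}) (i : x.LeftMoves) :
    (x + y).moveLeft (toLeftMovesAdd (Sum.inl i)) = x.moveLeft i + y := by
  cases x; cases y; rfl

@[simp] theorem add_moveLeft_inr (x : PGame.{u}) {y : PGame.{u}} (i : y.LeftMoves) :
    (x + y).moveLeft (toLeftMovesAdd (Sum.inr i)) = x + y.moveLeft i := by
  cases x; cases y; rfl

@[simp] theorem add_moveRight_inl {x : PGame.{u}} (y : PGame.{u}) (i : x.RightMoves) :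
    (x + y).moveRight (toRightMovesAdd (Sum.inl i)) = x.moveRight i + y := by
  cases x; cases y; rfl

@[simp] theorem add_moveRight_inr (x : PGame.{u}) {y : PGame.{u}} (i : y.RightMoves) :
    (x + y).moveRight (toRightMovesAdd (Sum.inr i)) = x + y.moveRight i := by
  cases x; cases y; rfl

theorem leftMoves_add_cases {x y : PGame.{u}} (k : (x + y).LeftMoves)
    {P : (x + y).LeftMoves → Prop}
    (hl : ∀ i, P (toLeftMovesAdd (Sum.inl i))) (hr : ∀ i, P (toLeftMovesAdd (Sum.inr i))) :
    P k := by
  obtain ⟨k, rfl⟩ := toLeftMovesAdd.surjective k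
  rcases k with i | i
  exacts [hl i, hr i]

theorem rightMoves_add_cases {x y : PGame.{u}} (k : (x + y).RightMoves)
    {P : (x + y).RightMoves → Prop}
    (hl : ∀ i, P (toRightMovesAdd (Sum.inl i))) (hr : ∀ i, P (toRightMovesAdd (Sum.inr i))) :
    P k := by
  obtain ⟨k, rfl⟩ := toRightMovesAdd.surjective k
  rcases k with i | i
  exacts [hl i, hr i]

theorem add_le_add_right_aux : ∀ x y z : PGame.{u},
    (x ≤ y → x + z ≤ y + z) ∧ (x ⧏ y → x + z ⧏ y + z) := by
  intro x
  induction x with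
  | mk xl xr xL xR IHxl IHxr =>
    intro y
    induction y with
    | mk yl yr yL yR IHyl IHyr =>
      intro z
      induction z with
      | mk zl zr zL zR IHzl IHzr =>
        constructor
        · intro h
          refine le_iff_forall_lf.2 ⟨fun k => ?_, fun k => ?_⟩
          · rcases toLeftMovesAdd.surjective k with ⟨i | i, rfl⟩
            · rw [add_moveLeft_inl]
              exact (IHxl i _ _).2 (moveLeft_lf_of_le h i)
            · rw [add_moveLeft_inr]
              have := moveLeft_lf (mk yl yr yL yR + mk zl zr zL zR) (toLeftMovesAdd (Sum.inr i))
              rw [add_moveLeft_inr] at this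
              exact lf_of_le_of_lf ((IHzl i).1 h) this
          · rcases toRightMovesAdd.surjective k with ⟨j | j, rfl⟩
            · rw [add_moveRight_inl]
              exact (IHyr j _).2 (lf_moveRight_of_le h j)
            · rw [add_moveRight_inr]
              have := lf_moveRight (mk xl xr xL xR + mk zl zr zL zR) (toRightMovesAdd (Sum.inr j))
              rw [add_moveRight_inr] at this
              exact lf_of_lf_of_le this ((IHzr j).1 h)
        · intro h
          rcases lf_iff_exists_le.1 h with ⟨i, hi⟩ | ⟨j, hj⟩
          · refine lf_of_le_moveLeft (i := toLeftMovesAdd (Sum.inl i)) ?_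
            rw [add_moveLeft_inl]
            exact (IHyl i _).1 hi
          · refine lf_of_moveRight_le (j := toRightMovesAdd (Sum.inl j)) ?_
            rw [add_moveRight_inl]
            exact (IHxr j _ _).1 hj

theorem add_le_add_right_pg {x y : PGame.{u}} (h : x ≤ y) (z : PGame.{u}) : x + z ≤ y + z :=
  (add_le_add_right_aux x y z).1 h

theorem neg_le_lf_aux : ∀ x y : PGame.{u}, (x ≤ y → -y ≤ -x) ∧ (x ⧏ y → -y ⧏ -x) := by
  intro x
  induction x with
  | mk xl xr xL xR IHxl IHxr =>
    intro y
    induction y with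
    | mk yl yr yL yR IHyl IHyr =>
      constructor
      · intro h
        exact le_iff_forall_lf.2 ⟨fun i => (IHyr i).2 (lf_moveRight_of_le h i),
          fun j => (IHxl j _).2 (moveLeft_lf_of_le h j)⟩
      · intro h
        rcases lf_iff_exists_le.1 h with ⟨i, hi⟩ | ⟨j, hj⟩
        · exact lf_of_moveRight_le (x := -mk yl yr yL yR) (j := i) ((IHyl i).1 hi)
        · exact lf_of_le_moveLeft (y := -mk xl xr xL xR) (i := j) ((IHxr j _).1 hj)

theorem neg_le_pg {x y : PGame.{u}} (h : x ≤ y) : -y ≤ -x := (neg_le_lf_aux x y).1 h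

theorem neg_add_cancel_aux : ∀ x : PGame.{u}, -x + x ≤ 0 ∧ 0 ≤ -x + x := by
  intro x
  induction x with
  | mk xl xr xL xR IHl IHr =>
    constructor
    · refine le_iff_forall_lf.2 ⟨fun k => ?_, fun j => isEmptyElim j⟩
      rcases toLeftMovesAdd.surjective k with ⟨i | i, rfl⟩
      · rw [add_moveLeft_inl]
        refine lf_of_moveRight_le (j := toRightMovesAdd (x := (-mk xl xr xL xR).moveLeft i)
          (y := mk xl xr xL xR) (Sum.inr i)) ?_
        exact le_trans (le_of_eq (add_moveRight_inr _ _)) (IHr i).1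
      · rw [add_moveLeft_inr]
        refine lf_of_moveRight_le (j := toRightMovesAdd (x := -mk xl xr xL xR)
          (y := (mk xl xr xL xR).moveLeft i) (Sum.inl i)) ?_
        exact le_trans (le_of_eq (add_moveRight_inl _ _)) (IHl i).1
    · refine le_iff_forall_lf.2 ⟨fun i => isEmptyElim i, fun k => ?_⟩
      rcases toRightMovesAdd.surjective k with ⟨j | j, rfl⟩
      · rw [add_moveRight_inl]
        refine lf_of_le_moveLeft (i := toLeftMovesAdd (x := (-mk xl xr xL xR).moveRight j)
          (y := mk xl xr xL xR) (Sum.inr j)) ?_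
        exact le_trans (IHl j).2 (le_of_eq (add_moveLeft_inr ((-mk xl xr xL xR).moveRight j)
          (y := mk xl xr xL xR) j).symm)
      · rw [add_moveRight_inr]
        refine lf_of_le_moveLeft (i := toLeftMovesAdd (x := -mk xl xr xL xR)
          (y := (mk xl xr xL xR).moveRight j) (Sum.inl j)) ?_
        exact le_trans (IHr j).2 (le_of_eq (add_moveLeft_inl (x := -mk xl xr xL xR)
          ((mk xl xr xL xR).moveRight j) j).symm)

/-- Relblelling, as a proposition. -/
inductive Relbl : PGame.{u} → PGame.{u} → Prop
  | mk {x y : PGame.{u}} (eL : x.LeftMoves ≃ y.LeftMoves) (eR : x.RightMoves ≃ y.RightMoves) :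
      (∀ i, Relbl (x.moveLeft i) (y.moveLeft (eL i))) →
      (∀ j, Relbl (x.moveRight j) (y.moveRight (eR j))) → Relbl x y

theorem Relbl.equiv {x y : PGame.{u}} (h : Relbl x y) : x ≈ y := by
  induction h with
  | @mk x y eL eR _ _ IHL IHR =>
    refine equiv_def.2 ⟨le_iff_forall_lf.2 ⟨fun i => lf_of_le_moveLeft (equiv_def.1 (IHL i)).1,
      fun j => ?_⟩, le_iff_forall_lf.2 ⟨fun i => ?_,
      fun j => lf_of_moveRight_le (equiv_def.1 (IHR j)).2⟩⟩
    · have h := (equiv_def.1 (IHR (eR.symm j))).1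
      rw [Equiv.apply_symm_apply] at h
      exact lf_of_moveRight_le h
    · have h := (equiv_def.1 (IHL (eL.symm i))).2
      rw [Equiv.apply_symm_apply] at h
      exact lf_of_le_moveLeft h

theorem zero_add_rl : ∀ x : PGame.{u}, Relbl (0 + x) x := by
  intro x
  induction x with
  | mk xl xr xL xR IHl IHr =>
    refine Relbl.mk (toLeftMovesAdd.symm.trans (Equiv.emptySum _ _))
      (toRightMovesAdd.symm.trans (Equiv.emptySum _ _)) (fun k => ?_) (fun k => ?_)
    · rcases toLeftMovesAdd.surjective k with ⟨i | i, rfl⟩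
      · exact isEmptyElim i
      · simp only [Equiv.trans_apply, Equiv.symm_apply_apply, Equiv.emptySum_apply_inr,
          add_moveLeft_inr]
        exact IHl i
    · rcases toRightMovesAdd.surjective k with ⟨i | i, rfl⟩
      · exact isEmptyElim i
      · simp only [Equiv.trans_apply, Equiv.symm_apply_apply, Equiv.emptySum_apply_inr,
          add_moveRight_inr]
        exact IHr i

theorem add_comm_rl : ∀ x y : PGame.{u}, Relbl (x + y) (y + x) := by
  intro x
  induction x with
  | mk xl xr xL xR IHxl IHxr =>
    intro y
    induction y with
    | mk yl yr yL yR IHyl IHyr =>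
      refine Relbl.mk (toLeftMovesAdd.symm.trans ((Equiv.sumComm _ _).trans toLeftMovesAdd))
        (toRightMovesAdd.symm.trans ((Equiv.sumComm _ _).trans toRightMovesAdd))
        (fun k => ?_) (fun k => ?_)
      · rcases toLeftMovesAdd.surjective k with ⟨i | i, rfl⟩
        · simp only [Equiv.trans_apply, Equiv.symm_apply_apply, Equiv.sumComm_apply,
            Sum.swap_inl, Sum.swap_inr, add_moveLeft_inl, add_moveLeft_inr]
          exact IHxl i _
        · simp only [Equiv.trans_apply, Equiv.symm_apply_apply, Equiv.sumComm_apply,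
            Sum.swap_inl, Sum.swap_inr, add_moveLeft_inl, add_moveLeft_inr]
          exact IHyl i
      · rcases toRightMovesAdd.surjective k with ⟨i | i, rfl⟩
        · simp only [Equiv.trans_apply, Equiv.symm_apply_apply, Equiv.sumComm_apply,
            Sum.swap_inl, Sum.swap_inr, add_moveRight_inl, add_moveRight_inr]
          exact IHxr i _
        · simp only [Equiv.trans_apply, Equiv.symm_apply_apply, Equiv.sumComm_apply,
            Sum.swap_inl, Sum.swap_inr, add_moveRight_inl, add_moveRight_inr]
          exact IHyr i

theorem add_assoc_rl : ∀ x y z : PGame.{u}, Relbl (x + y + z) (x + (y + z)) := by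
  intro x
  induction x with
  | mk xl xr xL xR IHxl IHxr =>
    intro y
    induction y with
    | mk yl yr yL yR IHyl IHyr =>
      intro z
      induction z with
      | mk zl zr zL zR IHzl IHzr =>
        refine Relbl.mk
          (toLeftMovesAdd.symm.trans ((Equiv.sumCongr toLeftMovesAdd.symm (Equiv.refl _)).trans
            ((Equiv.sumAssoc _ _ _).trans
              ((Equiv.sumCongr (Equiv.refl _) toLeftMovesAdd).trans toLeftMovesAdd))))
          (toRightMovesAdd.symm.trans ((Equiv.sumCongr toRightMovesAdd.symm (Equiv.refl _)).trans
            ((Equiv.sumAssoc _ _ _).trans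
              ((Equiv.sumCongr (Equiv.refl _) toRightMovesAdd).trans toRightMovesAdd))))
          (fun k => ?_) (fun k => ?_)
        · rcases toLeftMovesAdd.surjective k with ⟨k | i, rfl⟩
          · rcases toLeftMovesAdd.surjective k with ⟨i | i, rfl⟩
            · simp only [Equiv.trans_apply, Equiv.symm_apply_apply, Equiv.sumCongr_apply,
                Sum.map_inl, Sum.map_inr, Equiv.sumAssoc_apply_inl_inl,
                Equiv.sumAssoc_apply_inl_inr, Equiv.sumAssoc_apply_inr, Equiv.refl_apply,
                add_moveLeft_inl, add_moveLeft_inr]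
              exact IHxl i _ _
            · simp only [Equiv.trans_apply, Equiv.symm_apply_apply, Equiv.sumCongr_apply,
                Sum.map_inl, Sum.map_inr, Equiv.sumAssoc_apply_inl_inl,
                Equiv.sumAssoc_apply_inl_inr, Equiv.sumAssoc_apply_inr, Equiv.refl_apply,
                add_moveLeft_inl, add_moveLeft_inr]
              exact IHyl i _
          · simp only [Equiv.trans_apply, Equiv.symm_apply_apply, Equiv.sumCongr_apply,
              Sum.map_inl, Sum.map_inr, Equiv.sumAssoc_apply_inl_inl,
              Equiv.sumAssoc_apply_inl_inr, Equiv.sumAssoc_apply_inr, Equiv.refl_apply,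
              add_moveLeft_inl, add_moveLeft_inr]
            exact IHzl i
        · rcases toRightMovesAdd.surjective k with ⟨k | i, rfl⟩
          · rcases toRightMovesAdd.surjective k with ⟨i | i, rfl⟩
            · simp only [Equiv.trans_apply, Equiv.symm_apply_apply, Equiv.sumCongr_apply,
                Sum.map_inl, Sum.map_inr, Equiv.sumAssoc_apply_inl_inl,
                Equiv.sumAssoc_apply_inl_inr, Equiv.sumAssoc_apply_inr, Equiv.refl_apply,
                add_moveRight_inl, add_moveRight_inr]
              exact IHxr i _ _
            · simp only [Equiv.trans_apply, Equiv.symm_apply_apply, Equiv.sumCongr_apply,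
                Sum.map_inl, Sum.map_inr, Equiv.sumAssoc_apply_inl_inl,
                Equiv.sumAssoc_apply_inl_inr, Equiv.sumAssoc_apply_inr, Equiv.refl_apply,
                add_moveRight_inl, add_moveRight_inr]
              exact IHyr i _
          · simp only [Equiv.trans_apply, Equiv.symm_apply_apply, Equiv.sumCongr_apply,
              Sum.map_inl, Sum.map_inr, Equiv.sumAssoc_apply_inl_inl,
              Equiv.sumAssoc_apply_inl_inr, Equiv.sumAssoc_apply_inr, Equiv.refl_apply,
              add_moveRight_inl, add_moveRight_inr]
            exact IHzr i

theorem add_le_add_left_pg {x y : PGame.{u}} (h : x ≤ y) (z : PGame.{u}) : z + x ≤ z + y :=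
  le_trans (le_trans (equiv_def.1 (add_comm_rl z x).equiv).1 (add_le_add_right_pg h z))
    (equiv_def.1 (add_comm_rl y z).equiv).1

theorem add_congr_pg {x₁ x₂ y₁ y₂ : PGame.{u}} (hx : x₁ ≈ x₂) (hy : y₁ ≈ y₂) :
    x₁ + y₁ ≈ x₂ + y₂ :=
  equiv_def.2 ⟨le_trans (add_le_add_right_pg (equiv_def.1 hx).1 _)
      (add_le_add_left_pg (equiv_def.1 hy).1 _),
    le_trans (add_le_add_right_pg (equiv_def.1 hx).2 _)
      (add_le_add_left_pg (equiv_def.1 hy).2 _)⟩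

theorem birthday_mk' (xl xr : Type u) (xL : xl → PGame.{u}) (xR : xr → PGame.{u}) :
    birthday (mk xl xr xL xR) =
      max (⨆ i, Order.succ (birthday (xL i))) (⨆ i, Order.succ (birthday (xR i))) := by
  rw [birthday]

theorem birthday_moveLeft_lt {x : PGame.{u}} (i : x.LeftMoves) :
    (x.moveLeft i).birthday < x.birthday := by
  cases x with
  | mk xl xr xL xR =>
    rw [birthday_mk']
    exact lt_max_of_lt_left
      ((Order.lt_succ _).trans_le (le_ciSup (Ordinal.bddAbove_range.{u, u} _) i))

theorem birthday_moveRight_lt {x : PGame.{u}} (i : x.RightMoves) :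
    (x.moveRight i).birthday < x.birthday := by
  cases x with
  | mk xl xr xL xR =>
    rw [birthday_mk']
    exact lt_max_of_lt_right
      ((Order.lt_succ _).trans_le (le_ciSup (Ordinal.bddAbove_range.{u, u} _) i))

theorem birthday_eq_zero {x : PGame.{u}} :
    birthday x = 0 ↔ IsEmpty x.LeftMoves ∧ IsEmpty x.RightMoves := by
  cases x with
  | mk xl xr xL xR =>
    constructor
    · intro h
      refine ⟨⟨fun i => ?_⟩, ⟨fun j => ?_⟩⟩
      · have h1 := birthday_moveLeft_lt (x := mk xl xr xL xR) i
        rw [h] at h1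
        exact absurd h1 (by simp)
      · have h1 := birthday_moveRight_lt (x := mk xl xr xL xR) j
        rw [h] at h1
        exact absurd h1 (by simp)
    · rintro ⟨h1, h2⟩
      haveI : IsEmpty xl := h1
      haveI : IsEmpty xr := h2
      rw [birthday_mk', ciSup_of_empty, ciSup_of_empty, max_self, Ordinal.bot_eq_zero]

end PGame

/-- Games: pre-games up to equivalence. -/
abbrev Game : Type (u + 1) := Quotient PGame.setoid.{u}

namespace Game

open PGame

instance : Zero Game.{u} := ⟨⟦0⟧⟩

instance : Add Game.{u} := ⟨Quotient.map₂ (· + ·) fun _ _ hx _ _ hy => add_congr_pg hx hy⟩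

instance : Neg Game.{u} := ⟨Quotient.map (fun x => -x) fun _ _ h =>
    equiv_def.2 ⟨neg_le_pg (equiv_def.1 h).2, neg_le_pg (equiv_def.1 h).1⟩⟩

instance : AddCommGroup Game.{u} where
  zero := 0
  add := (· + ·)
  neg := Neg.neg
  add_assoc := by
    rintro ⟨x⟩ ⟨y⟩ ⟨z⟩
    exact Quotient.sound (add_assoc_rl x y z).equiv
  zero_add := by
    rintro ⟨x⟩
    exact Quotient.sound (zero_add_rl x).equiv
  add_zero := by
    rintro ⟨x⟩
    exact Quotient.sound (Setoid.trans (add_comm_rl x 0).equiv (zero_add_rl x).equiv)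
  add_comm := by
    rintro ⟨x⟩ ⟨y⟩
    exact Quotient.sound (add_comm_rl x y).equiv
  neg_add_cancel := by
    rintro ⟨x⟩
    exact Quotient.sound (equiv_def.2 (neg_add_cancel_aux x))
  nsmul := nsmulRec
  zsmul := zsmulRec

noncomputable instance : LE Game.{u} :=
  ⟨Quotient.lift₂ (fun x y : PGame => x ≤ y) fun _ _ _ _ hx hy => propext
    ⟨fun h => le_trans (equiv_def.1 hx).2 (le_trans h (equiv_def.1 hy).1),
      fun h => le_trans (equiv_def.1 hx).1 (le_trans h (equiv_def.1 hy).2)⟩⟩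

noncomputable instance : Preorder Game.{u} where
  le := (· ≤ ·)
  lt := fun a b => a ≤ b ∧ ¬ b ≤ a
  lt_iff_le_not_ge := fun _ _ => Iff.rfl
  le_refl := by
    rintro ⟨x⟩
    exact le_refl x
  le_trans := by
    rintro ⟨x⟩ ⟨y⟩ ⟨z⟩ h1 h2
    exact le_trans (α := PGame) (a := x) (b := y) (c := z) h1 h2

instance : IsOrderedAddMonoid Game.{u} where
  add_le_add_left := by
    rintro ⟨a⟩ ⟨b⟩ h ⟨c⟩
    exact add_le_add_right_pg (x := a) (y := b) h c

end Game

namespace PGame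

@[simp] theorem quot_add (x y : PGame.{u}) : (⟦x + y⟧ : Game) = ⟦x⟧ + ⟦y⟧ := rfl

@[simp] theorem quot_zero : (⟦0⟧ : Game.{u}) = 0 := rfl

@[simp] theorem quot_neg (x : PGame.{u}) : (⟦-x⟧ : Game) = -⟦x⟧ := rfl

theorem le_iff_game_le {x y : PGame.{u}} : x ≤ y ↔ (⟦x⟧ : Game) ≤ ⟦y⟧ := Iff.rfl

end PGame

end SetTheory

namespace StmtAux

open SetTheory PGame

/-! ### Dicotic accessors -/

lemma _root_.Dicotic.left {G : PGame} (h : Dicotic G) (i : G.LeftMoves) :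
    Dicotic (G.moveLeft i) := by
  rw [Dicotic] at h; exact h.2.1 i

lemma _root_.Dicotic.right {G : PGame} (h : Dicotic G) (j : G.RightMoves) :
    Dicotic (G.moveRight j) := by
  rw [Dicotic] at h; exact h.2.2 j

lemma _root_.Dicotic.cases' {G : PGame} (h : Dicotic G) :
    (IsEmpty G.LeftMoves ∧ IsEmpty G.RightMoves) ∨
      (Nonempty G.LeftMoves ∧ Nonempty G.RightMoves) := by
  rw [Dicotic] at h; exact h.1

/-! ### Basic facts about up and star -/

lemma up_moveLeft (i : upG.{u}.LeftMoves) : upG.moveLeft i = 0 := by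
  revert i; rintro ⟨⟨k, hk⟩⟩
  obtain rfl : k = 0 := by simpa using hk
  rfl

lemma up_moveRight (j : upG.{u}.RightMoves) : upG.moveRight j = PGame.star := by
  revert j; rintro ⟨⟨k, hk⟩⟩
  obtain rfl : k = 0 := by simpa using hk
  rfl

lemma nonempty_up_leftMoves : Nonempty upG.{u}.LeftMoves := by
  rw [upG, leftMoves_ofLists]; exact ⟨ULift.up ⟨0, by simp⟩⟩

lemma le_zero_of_empty {G : PGame} (h : IsEmpty G.LeftMoves) : G ≤ 0 :=
  le_iff_forall_lf.2 ⟨fun i => (h.false i).elim, fun j => isEmptyElim j⟩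

lemma empty_of_bday_lt_one {x : PGame} (h : x.birthday < 1) :
    IsEmpty x.LeftMoves ∧ IsEmpty x.RightMoves := by
  rwa [Ordinal.lt_one_iff_zero, birthday_eq_zero] at h

lemma lt_succ_le {a o : Ordinal.{u}} (h : a < o + 1) : a ≤ o := by
  rwa [Ordinal.add_one_eq_succ, Order.lt_succ_iff] at h

lemma zero_le_up : (0 : PGame.{u}) ≤ upG :=
  le_iff_forall_lf.2 ⟨fun i => isEmptyElim i,
    fun j => by rw [up_moveRight]; exact star_fuzzy_zero.2⟩

lemma zero_lf_up : (0 : PGame.{u}) ⧏ upG := by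
  obtain ⟨i⟩ := nonempty_up_leftMoves.{u}
  exact lf_iff_exists_le.2 (Or.inl ⟨i, by rw [up_moveLeft]⟩)

lemma star_lf_up : PGame.star.{u} ⧏ upG :=
  lf_iff_exists_le.2 (Or.inr ⟨(show PGame.star.RightMoves from PUnit.unit), by rw [star_moveRight]; exact zero_le_up⟩)

/-! ### Game-level facts -/

@[simp] lemma quot_copies_zero : (⟦copies 0 upG.{u}⟧ : Game) = 0 := rfl

lemma quot_copies_succ (n : ℕ) :
    (⟦copies (n + 1) upG.{u}⟧ : Game) = ⟦copies n upG⟧ + ⟦upG⟧ := rfl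

lemma s_add_s : (⟦PGame.star.{u}⟧ : Game) + ⟦PGame.star⟧ = 0 :=
  neg_eq_iff_add_eq_zero.1 (by rw [← quot_neg, neg_star])

lemma u_nonneg : (0 : Game) ≤ ⟦upG.{u}⟧ := zero_le_up

lemma not_u_le_zero : ¬ (⟦upG.{u}⟧ : Game) ≤ 0 := fun h =>
  PGame.not_le.2 zero_lf_up h

lemma not_u_le_s : ¬ (⟦upG.{u}⟧ : Game) ≤ ⟦PGame.star⟧ := fun h =>
  PGame.not_le.2 star_lf_up h

lemma not_s_le_zero : ¬ (⟦PGame.star.{u}⟧ : Game) ≤ 0 := fun h =>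
  PGame.not_le.2 star_fuzzy_zero.2 h

lemma zero_lf_up_add_star : (0 : PGame.{u}) ⧏ upG + PGame.star := by
  refine lf_iff_exists_le.2 (Or.inl ⟨toLeftMovesAdd (Sum.inr (show PGame.star.LeftMoves from PUnit.unit)), ?_⟩)
  rw [add_moveLeft_inr, star_moveLeft]
  rw [le_iff_game_le]
  simpa using u_nonneg

lemma not_us_le_zero : ¬ (⟦upG.{u}⟧ : Game) + ⟦PGame.star⟧ ≤ 0 := fun h =>
  PGame.not_le.2 zero_lf_up_add_star (by rw [le_iff_game_le]; simpa using h)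

lemma c_nonneg : ∀ n : ℕ, (0 : Game) ≤ ⟦copies n upG.{u}⟧
  | 0 => le_rfl
  | n + 1 => by rw [quot_copies_succ]; exact add_nonneg (c_nonneg n) u_nonneg

lemma glean {X Y P Q : Game} (e : Y - X = Q - P) (h : X ≤ Y) : P ≤ Q := by
  rw [← sub_nonneg, ← e, sub_nonneg]; exact h

/-! ### Options of `copies` -/

lemma copies_succ_moveLeft : ∀ (m : ℕ) (i : (copies (m + 1) upG.{u}).LeftMoves),
    (⟦(copies (m + 1) upG).moveLeft i⟧ : Game) = ⟦copies m upG⟧ := by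
  intro m
  induction m with
  | zero =>
    intro i
    refine leftMoves_add_cases
      (P := fun k => (⟦(copies 0 upG + upG).moveLeft k⟧ : Game) = ⟦copies 0 upG⟧) i ?_ ?_
    · intro i'; exact isEmptyElim (show (0 : PGame).LeftMoves from i')
    · intro i'
      rw [add_moveLeft_inr, up_moveLeft]
      simp
  | succ k ih =>
    intro i
    refine leftMoves_add_cases
      (P := fun j => (⟦(copies (k + 1) upG + upG).moveLeft j⟧ : Game) = ⟦copies (k + 1) upG⟧)
      i ?_ ?_
    · intro i'
      rw [add_moveLeft_inl, quot_add, ih i', quot_copies_succ]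
    · intro i'
      rw [add_moveLeft_inr, up_moveLeft, quot_add, quot_zero, add_zero]

lemma copies_succ_moveRight : ∀ (m : ℕ) (j : (copies (m + 1) upG.{u}).RightMoves),
    (⟦(copies (m + 1) upG).moveRight j⟧ : Game) = ⟦copies m upG⟧ + ⟦PGame.star⟧ := by
  intro m
  induction m with
  | zero =>
    intro j
    refine rightMoves_add_cases
      (P := fun k => (⟦(copies 0 upG + upG).moveRight k⟧ : Game) = ⟦copies 0 upG⟧ + ⟦PGame.star⟧)
      j ?_ ?_
    · intro j'; exact isEmptyElim (show (0 : PGame).RightMoves from j')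
    · intro j'
      rw [add_moveRight_inr, up_moveRight, quot_add]
  | succ k ih =>
    intro j
    refine rightMoves_add_cases
      (P := fun l => (⟦(copies (k + 1) upG + upG).moveRight l⟧ : Game) =
        ⟦copies (k + 1) upG⟧ + ⟦PGame.star⟧) j ?_ ?_
    · intro j'
      rw [add_moveRight_inl, quot_add, ih j', quot_copies_succ]
      abel
    · intro j'
      rw [add_moveRight_inr, up_moveRight, quot_add]

/-! ### The four impossible squeezes -/

lemma K1 {m : ℕ} {x : PGame} (h1 : copies (m + 1) upG ≤ x) (h2 : x ≤ copies m upG) : False :=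
  not_u_le_zero (glean (by rw [quot_copies_succ]; abel) (le_iff_game_le.1 (h1.trans h2)))

lemma K2 {m : ℕ} {x : PGame} (h1 : copies (m + 1) upG ≤ x)
    (h2 : x ≤ copies m upG + PGame.star) : False := by
  have h : (⟦copies (m + 1) upG⟧ : Game) ≤ ⟦copies m upG⟧ + ⟦PGame.star⟧ := by
    rw [← quot_add]; exact le_iff_game_le.1 (h1.trans h2)
  exact not_u_le_s (glean (by rw [quot_copies_succ]; abel) h)

lemma K3 {m : ℕ} {x : PGame} (h1 : copies (m + 1) upG + PGame.star ≤ x)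
    (h2 : x ≤ copies m upG) : False := by
  have h : (⟦copies (m + 1) upG⟧ : Game) + ⟦PGame.star⟧ ≤ ⟦copies m upG⟧ := by
    rw [← quot_add]; exact le_iff_game_le.1 (h1.trans h2)
  exact not_us_le_zero (glean (P := ⟦upG⟧ + ⟦PGame.star⟧) (by rw [quot_copies_succ]; abel) h)

lemma K4 {m : ℕ} {x : PGame} (h1 : copies (m + 1) upG + PGame.star ≤ x)
    (h2 : x ≤ copies m upG + PGame.star) : False := by
  have h : (⟦copies (m + 1) upG⟧ : Game) + ⟦PGame.star⟧ ≤ ⟦copies m upG⟧ + ⟦PGame.star⟧ := by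
    rw [← quot_add, ← quot_add]; exact le_iff_game_le.1 (h1.trans h2)
  exact not_u_le_zero (glean (by rw [quot_copies_succ]; abel) h)

/-! ### The main induction -/

theorem mainAux : ∀ n : ℕ,
    (∀ G : PGame.{u}, Dicotic G → G.birthday ≤ (n : Ordinal) + 1 →
      G ≤ copies n upG ∨ G ≤ copies n upG + PGame.star) ∧
    (∀ G : PGame.{u}, Dicotic G → G.birthday ≤ (n : Ordinal) + 1 + 1 →
      ¬ copies n upG ≤ G ∨ ¬ copies n upG + PGame.star ≤ G) := by
  intro n
  induction n with
  | zero =>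
    constructor
    · -- Main(0)
      intro G hG hb
      rw [Nat.cast_zero, zero_add] at hb
      rcases hG.cases' with ⟨hL, hR⟩ | ⟨hL, hR⟩
      · exact Or.inl (le_zero_of_empty hL)
      · right
        have hGstar : G ≤ PGame.star := by
          refine le_iff_forall_lf.2 ⟨fun i => ?_, fun j => ?_⟩
          · refine PGame.not_le.1 fun hle => ?_
            have hE := empty_of_bday_lt_one (lt_of_lt_of_le (birthday_moveLeft_lt i) hb)
            exact PGame.not_le.2 star_fuzzy_zero.2 (hle.trans (le_zero_of_empty hE.1))
          · rw [star_moveRight]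
            obtain ⟨j₀⟩ := hR
            have hE := empty_of_bday_lt_one (lt_of_lt_of_le (birthday_moveRight_lt j₀) hb)
            exact lf_iff_exists_le.2 (Or.inr ⟨j₀, le_zero_of_empty hE.1⟩)
        rw [le_iff_game_le] at hGstar ⊢
        simpa using hGstar
    · -- C(0)
      intro G hG hb
      rw [Nat.cast_zero, zero_add] at hb
      by_contra hcon
      push_neg at hcon
      obtain ⟨h0, hs⟩ := hcon
      rcases hG.cases' with ⟨hL, hR⟩ | ⟨hL, hR⟩
      · apply not_s_le_zero
        have h := le_iff_game_le.1 (hs.trans (le_zero_of_empty hL))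
        simpa using h
      · obtain ⟨j₀⟩ := hR
        have hRd : Dicotic (G.moveRight j₀) := hG.right j₀
        have hbR : (G.moveRight j₀).birthday ≤ (1 : Ordinal) :=
          lt_succ_le (lt_of_lt_of_le (birthday_moveRight_lt j₀) hb)
        have h0R : (0 : PGame) ≤ G.moveRight j₀ := by
          have h1 := (le_iff_forall_lf.1 hs).2 j₀
          rcases lf_iff_exists_le.1 h1 with ⟨i, hi⟩ | ⟨j, hj⟩
          · exfalso
            have hE := empty_of_bday_lt_one
              (lt_of_lt_of_le (birthday_moveLeft_lt i) hbR)
            apply not_s_le_zero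
            have h := le_iff_game_le.1 (hi.trans (le_zero_of_empty hE.1))
            simpa using h
          · revert hj
            refine rightMoves_add_cases
              (P := fun k => (copies 0 upG + PGame.star).moveRight k ≤ G.moveRight j₀ →
                (0 : PGame) ≤ G.moveRight j₀) j ?_ ?_
            · intro j' _
              exact isEmptyElim (show (0 : PGame).RightMoves from j')
            · intro j' hj
              rw [add_moveRight_inr, star_moveRight] at hj
              rw [le_iff_game_le] at hj ⊢
              simpa using hj
        have h2 := (le_iff_forall_lf.1 h0).2 j₀
        rcases lf_iff_exists_le.1 h2 with ⟨i, _⟩ | ⟨j, _⟩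
        · have hne : Nonempty (G.moveRight j₀).RightMoves := by
            rcases hRd.cases' with ⟨e1, _⟩ | ⟨_, n2⟩
            · exact (e1.false i).elim
            · exact n2
          obtain ⟨k⟩ := hne
          have hE := empty_of_bday_lt_one
            (lt_of_lt_of_le (birthday_moveRight_lt k) hbR)
          exact PGame.not_le.2 ((le_iff_forall_lf.1 h0R).2 k) (le_zero_of_empty hE.1)
        · exact isEmptyElim (show (0 : PGame).RightMoves from j)
  | succ m ih =>
    constructor
    · -- Main(m+1)
      intro G hG hb
      rw [Nat.cast_add, Nat.cast_one] at hb
      rcases hG.cases' with ⟨hL, hR⟩ | ⟨hL, hR⟩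
      · left
        refine (le_zero_of_empty hL).trans ?_
        rw [le_iff_game_le]
        simpa using c_nonneg (m + 1)
      · rcases Classical.em (copies m upG + PGame.star ≤ G) with hc | hc
        · -- right disjunct
          have hnc : ¬ copies m upG ≤ G := by
            rcases ih.2 G hG hb with h | h
            · exact h
            · exact absurd hc h
          right
          refine le_iff_forall_lf.2 ⟨fun i => ?_, fun j => ?_⟩
          · refine PGame.not_le.1 fun hle => ?_
            have hbL : (G.moveLeft i).birthday ≤ (m : Ordinal) + 1 :=
              lt_succ_le (lt_of_lt_of_le (birthday_moveLeft_lt i) hb)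
            rcases ih.1 (G.moveLeft i) (hG.left i) hbL with h | h
            · exact K3 hle h
            · exact K4 hle h
          · refine rightMoves_add_cases
              (P := fun k => G ⧏ (copies (m + 1) upG + PGame.star).moveRight k)
              j (fun j' => ?_) (fun j' => ?_)
            · refine PGame.not_le.1 fun hle => ?_
              rw [add_moveRight_inl] at hle
              apply hnc
              rw [le_iff_game_le] at hle ⊢
              calc (⟦copies m upG⟧ : Game)
                  = ⟦(copies (m + 1) upG).moveRight j' + PGame.star⟧ := by
                    rw [quot_add, copies_succ_moveRight, add_assoc, s_add_s, add_zero]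
                _ ≤ ⟦G⟧ := hle
            · refine PGame.not_le.1 fun hle => ?_
              rw [add_moveRight_inr, star_moveRight] at hle
              apply hnc
              rw [le_iff_game_le] at hle ⊢
              calc (⟦copies m upG⟧ : Game)
                  ≤ ⟦copies m upG⟧ + ⟦upG⟧ := le_add_of_nonneg_right u_nonneg
                _ = ⟦copies (m + 1) upG + 0⟧ := by
                    rw [quot_add, quot_copies_succ, quot_zero, add_zero]
                _ ≤ ⟦G⟧ := hle
        · -- left disjunct
          left
          refine le_iff_forall_lf.2 ⟨fun i => ?_, fun j => ?_⟩
          · refine PGame.not_le.1 fun hle => ?_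
            have hbL : (G.moveLeft i).birthday ≤ (m : Ordinal) + 1 :=
              lt_succ_le (lt_of_lt_of_le (birthday_moveLeft_lt i) hb)
            rcases ih.1 (G.moveLeft i) (hG.left i) hbL with h | h
            · exact K1 hle h
            · exact K2 hle h
          · refine PGame.not_le.1 fun hle => ?_
            apply hc
            rw [le_iff_game_le] at hle ⊢
            calc (⟦copies m upG + PGame.star⟧ : Game)
                = ⟦(copies (m + 1) upG).moveRight j⟧ := by
                  rw [quot_add, copies_succ_moveRight]
              _ ≤ ⟦G⟧ := hle
    · -- C(m+1)
      intro G hG hb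
      rw [Nat.cast_add, Nat.cast_one] at hb
      by_contra hcon
      push_neg at hcon
      obtain ⟨hU, hUS⟩ := hcon
      rcases hG.cases' with ⟨hL, hR⟩ | ⟨hL, hR⟩
      · apply not_us_le_zero
        have h := le_iff_game_le.1 (hUS.trans (le_zero_of_empty hL))
        calc (⟦upG⟧ : Game) + ⟦PGame.star⟧
            ≤ ⟦copies m upG⟧ + (⟦upG⟧ + ⟦PGame.star⟧) := le_add_of_nonneg_left (c_nonneg m)
          _ = ⟦copies (m + 1) upG + PGame.star⟧ := by
              rw [quot_add, quot_copies_succ]; abel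
          _ ≤ 0 := by simpa using h
      · obtain ⟨j₀⟩ := hR
        have hRd : Dicotic (G.moveRight j₀) := hG.right j₀
        have hbR : (G.moveRight j₀).birthday ≤ (m : Ordinal) + 1 + 1 :=
          lt_succ_le (lt_of_lt_of_le (birthday_moveRight_lt j₀) hb)
        have hA : copies m upG + PGame.star ≤ G.moveRight j₀ := by
          have h1 := (le_iff_forall_lf.1 hU).2 j₀
          rcases lf_iff_exists_le.1 h1 with ⟨i, hi⟩ | ⟨j, hj⟩
          · exfalso
            have hbL : ((G.moveRight j₀).moveLeft i).birthday ≤ (m : Ordinal) + 1 :=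
              lt_succ_le (lt_of_lt_of_le (birthday_moveLeft_lt i) hbR)
            rcases ih.1 _ (hRd.left i) hbL with h | h
            · exact K1 hi h
            · exact K2 hi h
          · rw [le_iff_game_le] at hj ⊢
            calc (⟦copies m upG + PGame.star⟧ : Game)
                = ⟦(copies (m + 1) upG).moveRight j⟧ := by
                  rw [quot_add, copies_succ_moveRight]
              _ ≤ ⟦G.moveRight j₀⟧ := hj
        have hB : copies m upG ≤ G.moveRight j₀ := by
          have h1 := (le_iff_forall_lf.1 hUS).2 j₀
          rcases lf_iff_exists_le.1 h1 with ⟨i, hi⟩ | ⟨j, hj⟩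
          · exfalso
            have hbL : ((G.moveRight j₀).moveLeft i).birthday ≤ (m : Ordinal) + 1 :=
              lt_succ_le (lt_of_lt_of_le (birthday_moveLeft_lt i) hbR)
            rcases ih.1 _ (hRd.left i) hbL with h | h
            · exact K3 hi h
            · exact K4 hi h
          · revert hj
            refine rightMoves_add_cases
              (P := fun k => (copies (m + 1) upG + PGame.star).moveRight k ≤ G.moveRight j₀ →
                copies m upG ≤ G.moveRight j₀) j (fun j' => ?_) (fun j' => ?_)
            · intro hj
              rw [add_moveRight_inl] at hj
              rw [le_iff_game_le] at hj ⊢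
              calc (⟦copies m upG⟧ : Game)
                  = ⟦(copies (m + 1) upG).moveRight j' + PGame.star⟧ := by
                    rw [quot_add, copies_succ_moveRight, add_assoc, s_add_s, add_zero]
                _ ≤ ⟦G.moveRight j₀⟧ := hj
            · intro hj
              rw [add_moveRight_inr, star_moveRight] at hj
              rw [le_iff_game_le] at hj ⊢
              calc (⟦copies m upG⟧ : Game)
                  ≤ ⟦copies m upG⟧ + ⟦upG⟧ := le_add_of_nonneg_right u_nonneg
                _ = ⟦copies (m + 1) upG + 0⟧ := by
                    rw [quot_add, quot_copies_succ, quot_zero, add_zero]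
                _ ≤ ⟦G.moveRight j₀⟧ := hj
        rcases ih.2 _ hRd hbR with h | h
        · exact h hB
        · exact h hA

end StmtAux

theorem stmt6 : ∀ (G : PGame) (n : ℕ), Dicotic G → G.birthday ≤ (n : Ordinal) + 1 →
    G ≤ copies n upG ∨ G ≤ copies n upG + star := by
  intro G n hG hb
  exact (StmtAux.mainAux n).1 G hG hb
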